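/- arXiv:0712.3676 — 2 statements merged into one kernel-verified Lean document; each statement's English description precedes it below -/
import Mathlib

section
/- Let C be a cocomplete closed symmetric monoidal category, A a commutative monoid object in C, q an ideal of A (a subobject of A in A-Mod), and f an element of the underlying set q₀ = Hom(1,q) whose image in A₀ is invertible in the monoid A₀. Then the inclusion q → A is an isomorphism. -/
open CategoryTheory CategoryTheory.Limits CategoryTheory.MonoidalCategory

universe v u

variable {C : Type u} [Category.{v} C] [MonoidalCategory C] [SymmetricCategory C]

/-- Product of two global elements of a monoid object: this is the monoid structure on
`A₀ = Hom(1, A)`. -/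
def mulHom (A : Mon C) (f g : 𝟙_ C ⟶ A.X) : 𝟙_ C ⟶ A.X :=
  (λ_ (𝟙_ C)).inv ≫ (f ⊗ₘ g) ≫ MonObj.mul (X := A.X)

/-- Invertibility of a global element in the monoid `A₀ = Hom(1, A)`. -/
def IsInvertibleEl (A : Mon C) (f : 𝟙_ C ⟶ A.X) : Prop :=
  ∃ g, mulHom A f g = MonObj.one (X := A.X) ∧ mulHom A g f = MonObj.one (X := A.X)

/-- Acting on a global element `t : 𝟙_ C ⟶ q.X` gives a module morphism from the
regular module: `a ↦ a • t`. -/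
def actEl {A : C} [MonObj A] (q : Mod C A) (t : 𝟙_ C ⟶ q.X) : Mod.regular A ⟶ q :=
  Mod.Hom.mk' ((ρ_ A).inv ≫ (A ◁ t) ≫ ModObj.smul (M := A) (X := q.X)) (by
    change MonObj.mul (X := A) ≫ (ρ_ A).inv ≫ A ◁ t ≫ ModObj.smul (M := A) (X := q.X) =
      A ◁ ((ρ_ A).inv ≫ A ◁ t ≫ ModObj.smul (M := A) (X := q.X)) ≫ ModObj.smul (M := A) (X := q.X)
    simp only [MonoidalCategory.whiskerLeft_comp, Category.assoc, ModObj.mul_smul_self_flip]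
    slice_lhs 1 2 => rw [rightUnitor_inv_naturality]
    slice_lhs 2 3 => rw [← whisker_exchange]
    slice_rhs 2 3 => rw [associator_inv_naturality_right]
    simp only [Category.assoc]
    have : (ρ_ (A ⊗ A)).inv = A ◁ (ρ_ A).inv ≫ (α_ A A (𝟙_ C)).inv := by
      monoidal
    rw [this]
    simp)

/-- If `q` is an ideal of a commutative monoid object `A` (a subobject of
`A` in `A`-Mod, given by a monomorphism `j : q ⟶ A`), and `f ∈ q₀` has invertible image
in the monoid `A₀ = Hom(1, A)`, then the inclusion `j` is an isomorphism. -/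
theorem ideal_eq_top_of_contains_invertible
    [MonoidalClosed C] [HasLimits C] [HasColimits C]
    (A : CommMon C) (q : Mod C A.X)
    (j : q ⟶ Mod.regular A.X) (hj : Mono j)
    (f : 𝟙_ C ⟶ q.X) (hf : IsInvertibleEl A.toMon (f ≫ j.hom)) :
    IsIso j := by
  obtain ⟨g, -, hg⟩ := hf
  set jh : q.X ⟶ A.X := j.hom with hjh
  set sm : A.X ⊗ q.X ⟶ q.X := ModObj.smul (M := A.X) (X := q.X) with hsm
  set g' : 𝟙_ C ⟶ A.X := g with hg'def
  have hg' : (λ_ (𝟙_ C)).inv ≫ (g' ⊗ₘ (f ≫ jh)) ≫ MonObj.mul (X := A.X) =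
      MonObj.one (X := A.X) := hg
  -- the element `g • f : 𝟙 ⟶ q.X`, whose image in `A` is `g * (f ≫ j) = 1`
  set t : 𝟙_ C ⟶ q.X := (λ_ (𝟙_ C)).inv ≫ (g' ⊗ₘ f) ≫ sm with ht
  have hjm : sm ≫ jh = A.X ◁ jh ≫ MonObj.mul := IsModHom.smul_hom (f := j.hom)
  have htj : t ≫ jh = MonObj.one (X := A.X) := by
    rw [← hg', ht, Category.assoc, Category.assoc, hjm, MonoidalCategory.tensorHom_def,
      MonoidalCategory.tensorHom_def, MonoidalCategory.whiskerLeft_comp]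
    simp only [Category.assoc]
  -- the module morphism `a ↦ a • t` is inverse to `j`
  set S : Mod.regular A.X ⟶ q := actEl q t with hS
  have hSj : S ≫ j = 𝟙 _ := by
    ext
    show (((ρ_ A.X).inv ≫ (A.X ◁ t) ≫ sm) ≫ jh) = 𝟙 A.X
    rw [Category.assoc, Category.assoc, hjm, ← MonoidalCategory.whiskerLeft_comp_assoc, htj]
    simp
  have hjS : j ≫ S = 𝟙 _ := by
    rw [← cancel_mono j, Category.assoc, hSj, Category.comp_id, Category.id_comp]
  exact ⟨S, hjS, hSj⟩
end

section
/- Let C be a cocomplete closed symmetric monoidal category, A a commutative monoid object, and f ∈ A₀ := Hom(1,A). The sequential colimit B := colim(A → A → A → ...) along the multiplication-by-f morphism φ(f) : A → A carries a commutative monoid structure under which it satisfies the universal property of the localization A_f: the image of f in B₀ is invertible, and any monoid morphism A → C sending f to an invertible element of C₀ factors uniquely through A → B. -/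
open CategoryTheory CategoryTheory.Limits CategoryTheory.MonoidalCategory

universe v u

variable {C : Type u} [Category.{v} C] [MonoidalCategory C] [SymmetricCategory C]

/-- The multiplication-by-`f` endomorphism `φ(f) = m_A ∘ (id_A ⊗ f) ∘ r_A⁻¹` of `A`. -/
def phi (A : Mon C) (f : 𝟙_ C ⟶ A.X) : A.X ⟶ A.X :=
  (ρ_ A.X).inv ≫ (A.X ◁ f) ≫ MonObj.mul (X := A.X)

namespace LocSeq

open scoped MonObj

section basic
variable (M : Mon C) (x y : 𝟙_ C ⟶ M.X)

omit [SymmetricCategory C] in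
lemma phi_mul : (M.X ◁ phi M x) ≫ μ[M.X] = μ[M.X] ≫ phi M x := by
  have coh : M.X ◁ (ρ_ M.X).inv ≫ (α_ M.X M.X (𝟙_ C)).inv = (ρ_ (M.X ⊗ M.X)).inv := by
    monoidal_coherence
  rw [phi, MonoidalCategory.whiskerLeft_comp, MonoidalCategory.whiskerLeft_comp,
    Category.assoc, Category.assoc, MonObj.mul_assoc_flip,
    associator_inv_naturality_right_assoc, whisker_exchange_assoc,
    reassoc_of% coh, ← rightUnitor_inv_naturality_assoc]

omit [SymmetricCategory C] in
lemma one_phi : η[M.X] ≫ phi M x = x := by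
  rw [phi, rightUnitor_inv_naturality_assoc, ← whisker_exchange_assoc, MonObj.one_mul,
    leftUnitor_naturality, ← unitors_inv_equal]
  simp

omit [SymmetricCategory C] in
lemma phi_one : phi M η[M.X] = 𝟙 M.X := by
  simp [phi]

omit [SymmetricCategory C] in
lemma hom_phi {N : Mon C} (u : M ⟶ N) : phi M x ≫ u.hom = u.hom ≫ phi N (x ≫ u.hom) := by
  rw [phi, phi, Category.assoc, Category.assoc, IsMonHom.mul_hom, tensorHom_def'_assoc,
    ← MonoidalCategory.whiskerLeft_comp_assoc, whisker_exchange_assoc,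
    ← rightUnitor_inv_naturality_assoc]

omit [SymmetricCategory C] in
lemma mulHom_eq : mulHom M x y = x ≫ phi M y := by
  rw [phi, rightUnitor_inv_naturality_assoc, ← tensorHom_def_assoc, mulHom, unitors_inv_equal]

omit [SymmetricCategory C] in
lemma phi_comp : phi M x ≫ phi M y = phi M (mulHom M x y) := by
  rw [mulHom_eq]
  conv_rhs => rw [phi]
  rw [MonoidalCategory.whiskerLeft_comp_assoc, phi_mul]
  conv_lhs => rw [phi]
  simp

lemma phi_mul' (M : CommMon C) (x : 𝟙_ C ⟶ M.X) :
    (phi (Mon.mk M.X) x ▷ M.X) ≫ μ[M.X] = μ[M.X] ≫ phi (Mon.mk M.X) x := by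
  conv_lhs => rw [← IsCommMonObj.mul_comm]
  rw [BraidedCategory.braiding_naturality_left_assoc, phi_mul (Mon.mk M.X), IsCommMonObj.mul_comm_assoc]

end basic

/-- The natural isomorphism `tensorLeft X ≅ tensorRight X` in a symmetric category. -/
def tlr (X : C) : tensorLeft X ≅ tensorRight X :=
  NatIso.ofComponents (fun Y => β_ X Y) (by intros; simp)

noncomputable instance [MonoidalClosed C] (X : C) : PreservesColimits (tensorRight X) :=
  preservesColimits_of_natIso (tlr X)

noncomputable instance [MonoidalClosed C] (X : C) :
    PreservesColimitsOfSize.{0, 0} (tensorLeft X) :=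
  preservesColimitsOfSize_shrink _

noncomputable instance [MonoidalClosed C] (X : C) :
    PreservesColimitsOfSize.{0, 0} (tensorRight X) :=
  preservesColimitsOfSize_shrink _


section colim
variable [MonoidalClosed C] [HasColimits C]
variable (A : CommMon C) (f : 𝟙_ C ⟶ A.X)

/-- The sequential diagram. -/
noncomputable abbrev Fd : ℕ ⥤ C :=
  Functor.ofSequence (X := fun _ : ℕ => A.X) (fun _ => phi (Mon.mk A.X) f)

noncomputable abbrev BX : C := colimit (Fd A f)

noncomputable abbrev ii (n : ℕ) : A.X ⟶ BX A f := colimit.ι (Fd A f) n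

lemma Fd_map (m : ℕ) : (Fd A f).map (homOfLE (Nat.le_add_right m 1)) = phi (Mon.mk A.X) f :=
  Functor.ofSequence_map_homOfLE_succ _ m

lemma ii_w (n : ℕ) : phi (Mon.mk A.X) f ≫ ii A f (n + 1) = ii A f n := by
  have := colimit.w (Fd A f) (homOfLE (Nat.le_add_right n 1))
  exact (congrArg (· ≫ ii A f (n + 1)) (Fd_map A f n)).symm.trans this

noncomputable def isColimL (X : C) :
    IsColimit ((tensorLeft X).mapCocone (colimit.cocone (Fd A f))) :=
  isColimitOfPreserves _ (colimit.isColimit _)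

noncomputable def isColimR (X : C) :
    IsColimit ((tensorRight X).mapCocone (colimit.cocone (Fd A f))) :=
  isColimitOfPreserves _ (colimit.isColimit _)

lemma hom_ext_left {X Y : C} {u v : X ⊗ BX A f ⟶ Y}
    (h : ∀ n, (X ◁ ii A f n) ≫ u = (X ◁ ii A f n) ≫ v) : u = v :=
  (isColimL A f X).hom_ext (fun n => h n)

lemma hom_ext_right {X Y : C} {u v : BX A f ⊗ X ⟶ Y}
    (h : ∀ n, (ii A f n ▷ X) ≫ u = (ii A f n ▷ X) ≫ v) : u = v :=
  (isColimR A f X).hom_ext (fun n => h n)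

lemma hom_ext₂ {Y : C} {u v : BX A f ⊗ BX A f ⟶ Y}
    (h : ∀ n m, (ii A f n ⊗ₘ ii A f m) ≫ u = (ii A f n ⊗ₘ ii A f m) ≫ v) : u = v := by
  apply hom_ext_right
  intro n
  apply hom_ext_left
  intro m
  rw [← tensorHom_def'_assoc, ← tensorHom_def'_assoc]
  exact h n m

/-- Constructor for cocones over `ℕ`-indexed diagrams from successive compatibilities. -/
def mkCocone (G : ℕ ⥤ C) {Z : C} (c : ∀ n, G.obj n ⟶ Z)
    (hc : ∀ n, G.map (homOfLE (Nat.le_add_right n 1)) ≫ c (n + 1) = c n) : Cocone G :=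
  ⟨Z, NatTrans.ofSequence (F := G) (G := (Functor.const ℕ).obj Z) c
    (by intro n; simpa using hc n)⟩


noncomputable def cB (n : ℕ) : A.X ⊗ BX A f ⟶ BX A f :=
  (isColimL A f A.X).desc (mkCocone _ (fun m => μ[A.X] ≫ ii A f (n + m))
    (by
      intro m
      refine (congrArg (fun (t : A.X ⟶ A.X) => (A.X ◁ t) ≫ μ[A.X] ≫ ii A f (n + (m + 1)))
        (Fd_map A f m)).trans ?_
      rw [reassoc_of% (phi_mul (Mon.mk A.X) f), show n + (m+1) = (n+m)+1 from rfl, ii_w]; rfl))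

lemma cB_fac (n m : ℕ) :
    (A.X ◁ ii A f m) ≫ cB A f n = μ[A.X] ≫ ii A f (n + m) := by
  exact (isColimL A f A.X).fac
    (mkCocone _ (fun m => μ[A.X] ≫ ii A f (n + m)) _) m

noncomputable def mulB : BX A f ⊗ BX A f ⟶ BX A f :=
  (isColimR A f (BX A f)).desc (mkCocone _ (fun n => cB A f n)
    (by
      intro n
      refine (congrArg (fun (t : A.X ⟶ A.X) => (t ▷ BX A f) ≫ cB A f (n + 1))
        (Fd_map A f n)).trans ?_
      apply hom_ext_left
      intro m
      rw [whisker_exchange_assoc, cB_fac, cB_fac, reassoc_of% (phi_mul' A f),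
        show n + 1 + m = (n+m)+1 by omega, ii_w]))

lemma mulB_fac (n : ℕ) : (ii A f n ▷ BX A f) ≫ mulB A f = cB A f n := by
  exact (isColimR A f (BX A f)).fac (mkCocone _ (fun n => cB A f n) _) n

lemma mulB_ι (n m : ℕ) :
    (ii A f n ⊗ₘ ii A f m) ≫ mulB A f = μ[A.X] ≫ ii A f (n + m) := by
  rw [tensorHom_def'_assoc, mulB_fac, cB_fac]

noncomputable abbrev oneB : 𝟙_ C ⟶ BX A f := η[A.X] ≫ ii A f 0

lemma hom_ext₃ {Y : C} {u v : (BX A f ⊗ BX A f) ⊗ BX A f ⟶ Y}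
    (h : ∀ n m k, ((ii A f n ⊗ₘ ii A f m) ⊗ₘ ii A f k) ≫ u =
      ((ii A f n ⊗ₘ ii A f m) ⊗ₘ ii A f k) ≫ v) : u = v := by
  apply hom_ext_left
  intro k
  apply (isColimitOfPreserves (tensorRight A.X) (isColimR A f (BX A f))).hom_ext
  intro n
  apply (isColimitOfPreserves (tensorRight A.X) (isColimL A f A.X)).hom_ext
  intro m
  have e : ((A.X ◁ ii A f m) ▷ A.X) ≫ ((ii A f n ▷ BX A f) ▷ A.X) ≫
      ((BX A f ⊗ BX A f) ◁ ii A f k) = (ii A f n ⊗ₘ ii A f m) ⊗ₘ ii A f k := by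
    rw [← comp_whiskerRight_assoc, ← tensorHom_def', ← whisker_exchange, ← tensorHom_def']
  simp only [Functor.mapCocone_ι_app, Functor.comp_obj, Functor.flip_obj_obj, Functor.flip_obj_map, curriedTensor_map_app,
    curriedTensor_obj_obj, curriedTensor_obj_map, Functor.ofSequence_obj, Category.assoc,
    colimit.cocone_ι]
  erw [reassoc_of% e, reassoc_of% e, h n m k]

noncomputable instance BMonObj : MonObj (BX A f) where
  one := oneB A f
  mul := mulB A f
  one_mul := by
    apply hom_ext_left
    intro m
    rw [whisker_exchange_assoc, MonoidalCategory.comp_whiskerRight, Category.assoc,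
      ← tensorHom_def_assoc, mulB_ι, Nat.zero_add, MonObj.one_mul_assoc,
      leftUnitor_naturality]
  mul_one := by
    apply hom_ext_right
    intro n
    rw [← whisker_exchange_assoc, MonoidalCategory.whiskerLeft_comp, Category.assoc,
      ← tensorHom_def'_assoc, mulB_ι, Nat.add_zero, MonObj.mul_one_assoc,
      rightUnitor_naturality]
  mul_assoc := by
    apply hom_ext₃
    intro n m k
    conv_lhs => rw [← MonoidalCategory.tensorHom_id, tensorHom_comp_tensorHom_assoc, mulB_ι,
      Category.comp_id, tensorHom_def_assoc, MonoidalCategory.comp_whiskerRight,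
      Category.assoc, ← tensorHom_def_assoc, mulB_ι, MonObj.mul_assoc_assoc,
      show n + m + k = n + (m + k) by omega]
    conv_rhs => rw [associator_naturality_assoc, ← MonoidalCategory.id_tensorHom,
      tensorHom_comp_tensorHom_assoc, Category.comp_id, mulB_ι, tensorHom_def'_assoc,
      MonoidalCategory.whiskerLeft_comp, Category.assoc, ← tensorHom_def'_assoc,
      mulB_ι]

noncomputable instance BMonComm : IsCommMonObj (BX A f) where
  mul_comm := by
    show (β_ (BX A f) (BX A f)).hom ≫ mulB A f = mulB A f
    apply hom_ext₂
    intro n m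
    rw [BraidedCategory.braiding_naturality_assoc, mulB_ι, mulB_ι,
      IsCommMonObj.mul_comm_assoc, show m + n = n + m by omega]

@[reducible] noncomputable def BMon : CommMon C where
  X := BX A f


/-- The canonical monoid morphism `A ⟶ B`. -/
noncomputable def etaB : A ⟶ BMon A f := CommMon.homMk <| Mon.Hom.mk'
  (M := (Mon.mk A.X)) (N := (Mon.mk (BMon A f).X)) (ii A f 0)
  rfl
  (mulB_ι A f 0 0).symm

lemma ii_phiB (k : ℕ) :
    ii A f k ≫ phi (Mon.mk (BMon A f).X) (f ≫ ii A f 0) = phi (Mon.mk A.X) f ≫ ii A f k := by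
  show ii A f k ≫ (ρ_ (BX A f)).inv ≫ (BX A f ◁ (f ≫ ii A f 0)) ≫ mulB A f = _
  rw [rightUnitor_inv_naturality_assoc, ← whisker_exchange_assoc,
    MonoidalCategory.whiskerLeft_comp, Category.assoc, ← tensorHom_def'_assoc,
    mulB_ι, Nat.add_zero, phi]
  simp only [Category.assoc]

lemma inv_fB : IsInvertibleEl (Mon.mk (BMon A f).X) (f ≫ (etaB A f).hom.hom) := by
  have hfι : f ≫ ii A f 1 = η[A.X] ≫ ii A f 0 := by
    rw [← ii_w A f 0, reassoc_of% (one_phi (Mon.mk A.X) f)]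
  refine ⟨η[A.X] ≫ ii A f 1, ?_, ?_⟩
  · show (λ_ (𝟙_ C)).inv ≫ ((f ≫ ii A f 0) ⊗ₘ (η[A.X] ≫ ii A f 1)) ≫ mulB A f = oneB A f
    rw [← tensorHom_comp_tensorHom_assoc, mulB_ι, reassoc_of% (MonObj.mul_one_hom (M := A.X) f),
      ← unitors_equal, Iso.inv_hom_id_assoc, Nat.zero_add, hfι]
  · show (λ_ (𝟙_ C)).inv ≫ ((η[A.X] ≫ ii A f 1) ⊗ₘ (f ≫ ii A f 0)) ≫ mulB A f = oneB A f
    rw [← tensorHom_comp_tensorHom_assoc, mulB_ι, reassoc_of% (MonObj.one_mul_hom (M := A.X) f),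
      Iso.inv_hom_id_assoc, Nat.add_zero, hfι]

section pw
variable {D : C}

/-- Iterate of an endomorphism. -/
noncomputable def pw (t : D ⟶ D) : ℕ → (D ⟶ D)
  | 0 => 𝟙 _
  | n + 1 => pw t n ≫ t

@[simp] lemma pw_zero (t : D ⟶ D) : pw t 0 = 𝟙 _ := rfl

lemma pw_succ (t : D ⟶ D) (n : ℕ) : pw t (n + 1) = pw t n ≫ t := rfl

lemma pw_succ' (t : D ⟶ D) (n : ℕ) : pw t (n + 1) = t ≫ pw t n := by
  induction n with
  | zero => rw [pw_succ, pw_zero]; simp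
  | succ n IH =>
    conv_lhs => rw [pw_succ, IH]
    rw [pw_succ, Category.assoc]

lemma pw_add (t : D ⟶ D) (n m : ℕ) : pw t n ≫ pw t m = pw t (n + m) := by
  induction m with
  | zero => simp
  | succ m IH => rw [pw_succ, show n + (m+1) = (n+m)+1 from rfl, pw_succ,
      ← Category.assoc, IH]

end pw

section univ
variable {D : CommMon C}

lemma pw_mul_left (t : D.X ⟶ D.X) (ht : (D.X ◁ t) ≫ μ[D.X] = μ[D.X] ≫ t) (n : ℕ) :
    (D.X ◁ pw t n) ≫ μ[D.X] = μ[D.X] ≫ pw t n := by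
  induction n with
  | zero => simp
  | succ n IH => rw [pw_succ, MonoidalCategory.whiskerLeft_comp, Category.assoc, ht,
      reassoc_of% IH]

lemma pw_mul_right (t : D.X ⟶ D.X) (ht : (t ▷ D.X) ≫ μ[D.X] = μ[D.X] ≫ t) (n : ℕ) :
    (pw t n ▷ D.X) ≫ μ[D.X] = μ[D.X] ≫ pw t n := by
  induction n with
  | zero => simp
  | succ n IH => rw [pw_succ, MonoidalCategory.comp_whiskerRight, Category.assoc, ht,
      reassoc_of% IH]

/-- A monoid morphism underlying a morphism of commutative monoids. -/
abbrev rt {A' D' : CommMon C} (h : A' ⟶ D') : Mon.mk A'.X ⟶ Mon.mk D'.X := h.hom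

variable (h : A ⟶ D) (g : 𝟙_ C ⟶ D.X)

lemma cancel1 (hg1 : mulHom (Mon.mk D.X) (f ≫ (rt h).hom) g = η[D.X]) :
    phi (Mon.mk D.X) (f ≫ (rt h).hom) ≫ phi (Mon.mk D.X) g = 𝟙 D.X := by
  rw [phi_comp, hg1, phi_one]

lemma cancel2 (hg2 : mulHom (Mon.mk D.X) g (f ≫ (rt h).hom) = η[D.X]) :
    phi (Mon.mk D.X) g ≫ phi (Mon.mk D.X) (f ≫ (rt h).hom) = 𝟙 D.X := by
  rw [phi_comp, hg2, phi_one]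

variable (hg1 : mulHom (Mon.mk D.X) (f ≫ (rt h).hom) g = η[D.X])
  (hg2 : mulHom (Mon.mk D.X) g (f ≫ (rt h).hom) = η[D.X])

noncomputable def vhom : BX A f ⟶ D.X :=
  colimit.desc (Fd A f) (mkCocone _ (fun n => (rt h).hom ≫ pw (phi (Mon.mk D.X) g) n)
    (by
      intro n
      refine (congrArg (fun (t : A.X ⟶ A.X) => t ≫ (rt h).hom ≫ pw (phi (Mon.mk D.X) g) (n + 1))
        (Fd_map A f n)).trans ?_
      rw [pw_succ', reassoc_of% (hom_phi (Mon.mk A.X) f (rt h)),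
        reassoc_of% (cancel1 A f h g hg1)]; rfl))

lemma vhom_ι (n : ℕ) :
    ii A f n ≫ vhom A f h g hg1 = (rt h).hom ≫ pw (phi (Mon.mk D.X) g) n :=
  colimit.ι_desc _ _

/-- The induced monoid morphism `B ⟶ D`. -/
noncomputable def vmon : BMon A f ⟶ D := CommMon.homMk <| Mon.Hom.mk'
  (M := (Mon.mk (BMon A f).X)) (N := (Mon.mk D.X)) (vhom A f h g hg1)
  (by
    show (η[A.X] ≫ ii A f 0) ≫ vhom A f h g hg1 = η[D.X]
    rw [Category.assoc, vhom_ι, pw_zero, Category.comp_id, IsMonHom.one_hom])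
  (by
    show mulB A f ≫ vhom A f h g hg1 = _
    apply hom_ext₂
    intro n m
    rw [reassoc_of% (mulB_ι A f n m), vhom_ι, tensorHom_comp_tensorHom_assoc, vhom_ι, vhom_ι,
      ← tensorHom_comp_tensorHom_assoc,
      tensorHom_def_assoc (pw (phi (Mon.mk D.X) g) n) (pw (phi (Mon.mk D.X) g) m),
      pw_mul_left (phi (Mon.mk D.X) g) (phi_mul (Mon.mk D.X) g) m,
      reassoc_of% (pw_mul_right (phi (Mon.mk D.X) g) (phi_mul' D g) n),
      pw_add, ← IsMonHom.mul_hom_assoc])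

lemma v_unique (w : BMon A f ⟶ D) (hw : etaB A f ≫ w = h) :
    w = vmon A f h g hg1 := by
  have hw0 : ii A f 0 ≫ (rt w).hom = (rt h).hom := congrArg (fun x => x.hom.hom) hw
  have key : ∀ n, ii A f n ≫ (rt w).hom = (rt h).hom ≫ pw (phi (Mon.mk D.X) g) n := by
    intro n
    induction n with
    | zero => simpa using hw0
    | succ n IH =>
      have e0 : f ≫ ii A f 0 ≫ (rt w).hom = f ≫ (rt h).hom := by rw [hw0]
      have e1 : ii A f n ≫ (rt w).hom =
          ii A f (n + 1) ≫ (rt w).hom ≫ phi (Mon.mk D.X) (f ≫ (rt h).hom) := by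
        conv_lhs => rw [← ii_w A f n, ← ii_phiB A f (n+1), Category.assoc,
          hom_phi (Mon.mk (BMon A f).X) (f ≫ ii A f 0) (rt w), Category.assoc, e0]
      have e2 : ii A f (n + 1) ≫ (rt w).hom = (ii A f n ≫ (rt w).hom) ≫ phi (Mon.mk D.X) g := by
        rw [e1]
        simp only [Category.assoc]
        rw [cancel1 A f h g hg1, Category.comp_id]
      rw [e2, IH, Category.assoc, pw_succ]
  apply CommMon.hom_ext
  apply colimit.hom_ext
  intro n
  show ii A f n ≫ (rt w).hom = ii A f n ≫ vhom A f h g hg1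
  rw [key]
  exact (vhom_ι A f h g hg1 n).symm

end univ
end colim
end LocSeq

/-- For a commutative monoid object `A` in a cocomplete closed symmetric
monoidal category, and `f ∈ A₀`, the sequential colimit `B = colim (A → A → ⋯)` along
`φ(f)` carries a commutative monoid structure satisfying the universal property of the
localization `A_f`: the image of `f` in `B₀` is invertible and any morphism of
commutative monoid objects `A ⟶ D` inverting `f` factors uniquely through `A ⟶ B`. -/
theorem localization_as_sequential_colimit
    [MonoidalClosed C] [HasColimits C]
    (A : CommMon C) (f : 𝟙_ C ⟶ A.X) :
    ∃ (B : CommMon C) (η : A ⟶ B)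
      (iso : B.X ≅ colimit (Functor.ofSequence (X := fun _ : ℕ => A.X)
        (fun _ => phi A.toMon f))),
      η.hom.hom ≫ iso.hom = colimit.ι (Functor.ofSequence (X := fun _ : ℕ => A.X)
        (fun _ => phi A.toMon f)) 0 ∧
      IsInvertibleEl B.toMon (f ≫ η.hom.hom) ∧
      ∀ (D : CommMon C) (h : A ⟶ D), IsInvertibleEl D.toMon (f ≫ h.hom.hom) →
        ∃! v : B ⟶ D, η ≫ v = h := by
  refine ⟨LocSeq.BMon A f, LocSeq.etaB A f, Iso.refl _, ?_, LocSeq.inv_fB A f, ?_⟩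
  · exact Category.comp_id _
  · rintro D h ⟨g, hg1, hg2⟩
    refine ⟨LocSeq.vmon A f h g hg1, ?_, fun w hw => LocSeq.v_unique A f h g hg1 w hw⟩
    apply CommMon.hom_ext
    exact (LocSeq.vhom_ι A f h g hg1 0).trans (Category.comp_id _)
end
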